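/- Let U be a Banach space, V a Hilbert space, and b : U × V → ℝ a bounded bilinear form satisfying the injectivity condition and the inf-sup condition with constant γ > 0. Then for every bounded linear functional ℓ ∈ V' there exists a unique u ∈ U with b(u,v) = ℓ(v) for all v ∈ V, and this u satisfies ‖u‖_E ≤ ‖ℓ‖_{V'}, where ‖u‖_E = sup_{v≠0} b(u,v)/‖v‖_V. -/

import Mathlib

open InnerProductSpace Metric Finset Filter
open scoped RealInnerProductSpace

/-- Approximation step: the image under `T` of the ball of radius `‖y‖/γ` gets within
`‖y‖/2` of `y`. -/
lemma dpg_approx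
    {U V : Type*} [NormedAddCommGroup U] [NormedSpace ℝ U]
    [NormedAddCommGroup V] [InnerProductSpace ℝ V] [CompleteSpace V]
    (b : U →L[ℝ] V →L[ℝ] ℝ)
    (γ : ℝ) (hγ : 0 < γ)
    (hinfsup : ∀ v : V, γ * ‖v‖ ≤ sSup {r : ℝ | ∃ u : U, u ≠ 0 ∧ r = b u v / ‖u‖})
    (T : U →L[ℝ] V) (hT : ∀ u v, ⟪T u, v⟫ = b u v) (y : V) :
    ∃ u : U, ‖u‖ ≤ ‖y‖ / γ ∧ ‖y - T u‖ ≤ 1 / 2 * ‖y‖ := by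
  by_cases hy : y = 0
  · exact ⟨0, by simp [hy, le_div_iff₀ hγ]⟩
  have hy0 : 0 < ‖y‖ := norm_pos_iff.mpr hy
  by_contra hcon
  push_neg at hcon
  set K : Set V := T '' closedBall 0 (‖y‖ / γ) with hK
  have hsc : Convex ℝ (closure K) :=
    ((convex_closedBall (0 : U) (‖y‖ / γ)).linear_image T.toLinearMap).closure
  have hynot : y ∉ closure K := by
    intro hmem
    obtain ⟨x, hxK, hdx⟩ := Metric.mem_closure_iff.mp hmem (1 / 2 * ‖y‖) (by positivity)
    obtain ⟨u, hu, rfl⟩ := hxK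
    rw [mem_closedBall, dist_zero_right] at hu
    exact absurd hdx (not_lt.mpr (by rw [dist_eq_norm]; exact (hcon u hu).le))
  obtain ⟨f, c, hfs, hcy⟩ :=
    geometric_hahn_banach_closed_point hsc isClosed_closure hynot
  have h0K : (0 : V) ∈ K := ⟨0, by simp [mem_closedBall]; positivity, map_zero T⟩
  have hc0 : 0 < c := by simpa using hfs 0 (subset_closure h0K)
  set v : V := (toDual ℝ V).symm f with hv
  have hfv : ∀ w : V, f w = ⟪v, w⟫ := fun w => (toDual_symm_apply).symm
  have key : ∀ u : U, u ≠ 0 → b u v / ‖u‖ ≤ c * γ / ‖y‖ := by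
    intro u hu
    have hun : 0 < ‖u‖ := norm_pos_iff.mpr hu
    set t : ℝ := (‖y‖ / γ) / ‖u‖ with ht
    have htpos : 0 < t := by positivity
    have hmem : t • u ∈ closedBall (0 : U) (‖y‖ / γ) := by
      rw [mem_closedBall, dist_zero_right, norm_smul, Real.norm_eq_abs,
        abs_of_pos htpos, ht, div_mul_cancel₀]
      exact hun.ne'
    have hlt : f (T (t • u)) < c := hfs _ (subset_closure ⟨_, hmem, rfl⟩)
    have heq : f (T (t • u)) = t * b u v := by
      rw [hfv, real_inner_comm, hT, map_smul]
      simp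
    rw [heq] at hlt
    have : b u v < c / t := (lt_div_iff₀ htpos).mpr (by linarith [hlt, mul_comm t (b u v)])
    have hct : c / t = c * γ * ‖u‖ / ‖y‖ := by
      field_simp [ht]
      rw [ht, div_mul_eq_mul_div, div_mul_cancel₀ _ hun.ne', div_mul_cancel₀ _ hγ.ne']
    rw [div_le_div_iff₀ hun hy0]
    have h1 : b u v * ‖y‖ ≤ c * γ * ‖u‖ := by
      have h0 := mul_le_mul_of_nonneg_right this.le hy0.le
      rw [hct, div_mul_cancel₀ _ hy0.ne'] at h0
      exact h0
    exact h1
  have hsup : sSup {r : ℝ | ∃ u : U, u ≠ 0 ∧ r = b u v / ‖u‖} ≤ c * γ / ‖y‖ := by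
    apply Real.sSup_le
    · rintro r ⟨u, hu, rfl⟩; exact key u hu
    · positivity
  have hvy : γ * ‖v‖ ≤ c * γ / ‖y‖ := (hinfsup v).trans hsup
  have hvb : ‖v‖ * ‖y‖ ≤ c := by
    have h3 : γ * ‖v‖ * ‖y‖ ≤ c * γ := by
      have h4 := mul_le_mul_of_nonneg_right hvy hy0.le
      rwa [div_mul_cancel₀ _ hy0.ne'] at h4
    nlinarith [h3, hγ]
  have : c < c := by
    calc c < f y := hcy
      _ = ⟪v, y⟫ := hfv y
      _ ≤ ‖v‖ * ‖y‖ := real_inner_le_norm v y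
      _ ≤ c := hvb
  exact lt_irrefl c this

/-- Completeness iteration: approximate solvability implies surjectivity. -/
lemma dpg_surj
    {U V : Type*} [NormedAddCommGroup U] [NormedSpace ℝ U] [CompleteSpace U]
    [NormedAddCommGroup V] [NormedSpace ℝ V]
    (γ : ℝ) (hγ : 0 < γ) (T : U →L[ℝ] V)
    (happrox : ∀ y : V, ∃ u : U, ‖u‖ ≤ ‖y‖ / γ ∧ ‖y - T u‖ ≤ 1 / 2 * ‖y‖) :
    Function.Surjective T := by
  choose g hg using happrox
  set h : V → V := fun y => y - T (g y) with hh
  have hle : ∀ y, ‖h y‖ ≤ 1 / 2 * ‖y‖ := fun y => (hg y).2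
  intro y
  have hnle : ∀ n : ℕ, ‖h^[n] y‖ ≤ (1 / 2) ^ n * ‖y‖ := by
    intro n
    induction n with
    | zero => simp
    | succ n IH =>
      rw [Function.iterate_succ']
      apply le_trans (hle _) _
      rw [pow_succ', mul_assoc]
      gcongr
  set u : ℕ → U := fun n => g (h^[n] y) with hu
  have ule : ∀ n, ‖u n‖ ≤ (1 / 2) ^ n * (‖y‖ / γ) := fun n ↦ by
    refine le_trans (hg _).1 ?_
    rw [div_le_iff₀ hγ]
    calc ‖h^[n] y‖ ≤ (1 / 2) ^ n * ‖y‖ := hnle n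
      _ = (1 / 2) ^ n * (‖y‖ / γ) * γ := by field_simp
  have sNu : Summable fun n => ‖u n‖ := by
    refine .of_nonneg_of_le (fun n => norm_nonneg _) ule ?_
    exact Summable.mul_right _ (summable_geometric_of_lt_one (by norm_num) (by norm_num))
  have su : Summable u := sNu.of_norm
  set x := tsum u with hx
  have fsumeq : ∀ n : ℕ, T (∑ i ∈ Finset.range n, u i) = y - h^[n] y := by
    intro n
    induction n with
    | zero => simp
    | succ n IH =>
      rw [Finset.sum_range_succ, T.map_add, IH, Function.iterate_succ_apply', sub_add]
  have htend : Tendsto (fun n => ∑ i ∈ Finset.range n, u i) atTop (nhds x) :=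
    su.hasSum.tendsto_sum_nat
  have L₁ : Tendsto (fun n => T (∑ i ∈ Finset.range n, u i)) atTop (nhds (T x)) :=
    (T.continuous.tendsto _).comp htend
  simp only [fsumeq] at L₁
  have L₂ : Tendsto (fun n => y - h^[n] y) atTop (nhds (y - 0)) := by
    refine tendsto_const_nhds.sub ?_
    rw [tendsto_iff_norm_sub_tendsto_zero]
    simp only [sub_zero]
    refine squeeze_zero (fun _ => norm_nonneg _) hnle ?_
    rw [← zero_mul ‖y‖]
    refine (tendsto_pow_atTop_nhds_zero_of_lt_one ?_ ?_).mul tendsto_const_nhds <;> norm_num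
  have feq : T x = y - 0 := tendsto_nhds_unique L₁ L₂
  rw [sub_zero] at feq
  exact ⟨x, feq⟩

/-- under injectivity and inf-sup, for every `ℓ ∈ V'` the variational
problem `b(u,v) = ℓ(v)` for all `v` has a unique solution `u`, with `‖u‖_E ≤ ‖ℓ‖_{V'}`. -/
theorem dpg_continuous_wellposedness
    (U V : Type*) [NormedAddCommGroup U] [NormedSpace ℝ U] [CompleteSpace U]
    [NormedAddCommGroup V] [InnerProductSpace ℝ V] [CompleteSpace V]
    (b : U →L[ℝ] V →L[ℝ] ℝ)
    (hinj : ∀ u : U, (∀ v : V, b u v = 0) → u = 0)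
    (γ : ℝ) (hγ : 0 < γ)
    (hinfsup : ∀ v : V, γ * ‖v‖ ≤ sSup {r : ℝ | ∃ u : U, u ≠ 0 ∧ r = b u v / ‖u‖})
    (E : U → ℝ)
    (hE : ∀ u : U, E u = sSup {r : ℝ | ∃ v : V, v ≠ 0 ∧ r = b u v / ‖v‖})
    (ℓ : V →L[ℝ] ℝ) :
    (∃! u : U, ∀ v : V, b u v = ℓ v) ∧
    (∀ u : U, (∀ v : V, b u v = ℓ v) → E u ≤ ‖ℓ‖) := by
  set T : U →L[ℝ] V :=
    ((toDual ℝ V).symm.toContinuousLinearEquiv.toContinuousLinearMap).comp b with hTdef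
  have hT : ∀ u v, ⟪T u, v⟫ = b u v := by
    intro u v
    simp [hTdef, toDual_symm_apply]
  have hsurj : Function.Surjective T :=
    dpg_surj γ hγ T (dpg_approx b γ hγ hinfsup T hT)
  constructor
  · obtain ⟨u, hu⟩ := hsurj ((toDual ℝ V).symm ℓ)
    refine ⟨u, fun v => ?_, fun u' hu' => ?_⟩
    · rw [← hT, hu, toDual_symm_apply]
    · apply sub_eq_zero.mp
      have := hinj (u' - u) (fun v => by
        have h1 : b u' v = ℓ v := hu' v
        have h2 : b u v = ℓ v := by rw [← hT, hu, toDual_symm_apply]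
        simp [h1, h2])
      simpa [sub_eq_zero] using this
  · intro u husol
    rw [hE]
    apply Real.sSup_le
    · rintro r ⟨v, hv, rfl⟩
      rw [husol v, div_le_iff₀ (norm_pos_iff.mpr hv)]
      exact (le_abs_self _).trans (ℓ.le_opNorm v)
    · exact norm_nonneg ℓ
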